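/- A sequence (xₙ) in C⁰([0,T], X) converges weakly to x in C⁰([0,T], X) if and only if (xₙ) is bounded in C⁰([0,T], X) and xₙ(t) ⇀ x(t) weakly in X for every t ∈ [0,T]. -/

import Mathlib

open Filter

section RMK

open MeasureTheory TopologicalSpace Set

namespace Stmt2Aux

variable {S : Type*} [TopologicalSpace S]

variable (Λ : C(S, ℝ) → ℝ)

/-- Test functions for the Riesz content of `K`. -/
def lamSet (K : Set S) : Set ℝ :=
  Λ '' {f : C(S, ℝ) | (∀ s, 0 ≤ f s) ∧ ∀ s ∈ K, 1 ≤ f s}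

/-- The Riesz content of `K`. -/
noncomputable def lamr (K : Set S) : ℝ :=
  sInf (lamSet Λ K)

variable (h_nonneg : ∀ f : C(S, ℝ), (∀ s, 0 ≤ f s) → 0 ≤ Λ f)
variable (h_mono : ∀ f g : C(S, ℝ), (∀ s, 0 ≤ f s) → (∀ s, f s ≤ g s) → Λ f ≤ Λ g)
variable (h_add : ∀ f g : C(S, ℝ), (∀ s, 0 ≤ f s) → (∀ s, 0 ≤ g s) → Λ (f + g) = Λ f + Λ g)
variable (h_smul : ∀ (c : ℝ) (f : C(S, ℝ)), 0 ≤ c → (∀ s, 0 ≤ f s) → Λ (c • f) = c * Λ f)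

lemma lamSet_nonempty (K : Set S) : (lamSet Λ K).Nonempty :=
  ⟨Λ 1, ⟨1, ⟨fun _ => zero_le_one, fun _ _ => le_refl 1⟩, rfl⟩⟩

include h_nonneg in
lemma lamSet_nonneg {K : Set S} {a : ℝ} (ha : a ∈ lamSet Λ K) : 0 ≤ a := by
  obtain ⟨f, hf, rfl⟩ := ha
  exact h_nonneg f hf.1

include h_nonneg in
lemma lamSet_bddBelow (K : Set S) : BddBelow (lamSet Λ K) :=
  ⟨0, fun a ha => lamSet_nonneg Λ h_nonneg ha⟩

include h_nonneg in
lemma lamr_nonneg (K : Set S) : 0 ≤ lamr Λ K :=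
  le_csInf (lamSet_nonempty Λ K) (fun a ha => lamSet_nonneg Λ h_nonneg ha)

include h_nonneg in
lemma lamr_mono {K₁ K₂ : Set S} (h : K₁ ⊆ K₂) : lamr Λ K₁ ≤ lamr Λ K₂ := by
  apply csInf_le_csInf (lamSet_bddBelow Λ h_nonneg K₁) (lamSet_nonempty Λ K₂)
  rintro a ⟨f, ⟨hf0, hf1⟩, rfl⟩
  exact ⟨f, ⟨hf0, fun s hs => hf1 s (h hs)⟩, rfl⟩

include h_nonneg in
lemma lamr_le {K : Set S} {f : C(S, ℝ)} (hf0 : ∀ s, 0 ≤ f s) (hf1 : ∀ s ∈ K, 1 ≤ f s) :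
    lamr Λ K ≤ Λ f :=
  csInf_le (lamSet_bddBelow Λ h_nonneg K) ⟨f, ⟨hf0, hf1⟩, rfl⟩

include h_mono in
lemma le_lamr {K : Set S} {h : C(S, ℝ)} (hh0 : ∀ s, 0 ≤ h s) (hh1 : ∀ s, h s ≤ 1)
    (hsupp : ∀ s ∉ K, h s = 0) : Λ h ≤ lamr Λ K := by
  apply le_csInf (lamSet_nonempty Λ K)
  rintro a ⟨f, ⟨hf0, hf1⟩, rfl⟩
  apply h_mono h f hh0
  intro s
  by_cases hs : s ∈ K
  · exact (hh1 s).trans (hf1 s hs)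
  · rw [hsupp s hs]; exact hf0 s

include h_nonneg h_add in
lemma lamr_union_le (K₁ K₂ : Set S) :
    lamr Λ (K₁ ∪ K₂) ≤ lamr Λ K₁ + lamr Λ K₂ := by
  apply le_of_forall_pos_le_add
  intro ε hε
  obtain ⟨a₁, ha₁, ha₁'⟩ := exists_lt_of_csInf_lt (lamSet_nonempty Λ K₁)
    (lt_add_of_pos_right (lamr Λ K₁) (half_pos hε))
  obtain ⟨a₂, ha₂, ha₂'⟩ := exists_lt_of_csInf_lt (lamSet_nonempty Λ K₂)
    (lt_add_of_pos_right (lamr Λ K₂) (half_pos hε))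
  obtain ⟨f₁, ⟨hf₁0, hf₁1⟩, rfl⟩ := ha₁
  obtain ⟨f₂, ⟨hf₂0, hf₂1⟩, rfl⟩ := ha₂
  have hle : lamr Λ (K₁ ∪ K₂) ≤ Λ (f₁ + f₂) := by
    apply lamr_le Λ h_nonneg
    · intro s; simpa using add_nonneg (hf₁0 s) (hf₂0 s)
    · rintro s (hs | hs)
      · simpa using le_add_of_le_of_nonneg (hf₁1 s hs) (hf₂0 s)
      · simpa using le_add_of_nonneg_of_le (hf₁0 s) (hf₂1 s hs)
  rw [h_add f₁ f₂ hf₁0 hf₂0] at hle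
  linarith

include h_nonneg h_mono h_add in
lemma union_le_lamr [T2Space S] {K₁ K₂ : Set S} (h₁ : IsClosed K₁) (h₂ : IsClosed K₂)
    [NormalSpace S] (hd : Disjoint K₁ K₂) :
    lamr Λ K₁ + lamr Λ K₂ ≤ lamr Λ (K₁ ∪ K₂) := by
  obtain ⟨g, hg0, hg1, hgIcc⟩ := exists_continuous_zero_one_of_isClosed h₂ h₁ hd.symm
  apply le_csInf (lamSet_nonempty Λ (K₁ ∪ K₂))
  rintro a ⟨f, ⟨hf0, hf1⟩, rfl⟩
  have e1 : lamr Λ K₁ ≤ Λ (f * g) := by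
    apply lamr_le Λ h_nonneg
    · intro s
      exact mul_nonneg (hf0 s) (hgIcc s).1
    · intro s hs
      have : g s = 1 := hg1 hs
      simp only [ContinuousMap.mul_apply, this, mul_one]
      exact hf1 s (Or.inl hs)
  have e2 : lamr Λ K₂ ≤ Λ (f * (1 - g)) := by
    apply lamr_le Λ h_nonneg
    · intro s
      apply mul_nonneg (hf0 s)
      simp only [ContinuousMap.sub_apply, ContinuousMap.one_apply]
      linarith [(hgIcc s).2]
    · intro s hs
      have : g s = 0 := hg0 hs
      simp only [ContinuousMap.mul_apply, ContinuousMap.sub_apply, ContinuousMap.one_apply, this]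
      simpa using hf1 s (Or.inr hs)
  have e3 : Λ (f * g) + Λ (f * (1 - g)) = Λ f := by
    rw [← h_add]
    · congr 1
      ext s
      simp only [ContinuousMap.add_apply, ContinuousMap.mul_apply, ContinuousMap.sub_apply,
        ContinuousMap.one_apply]
      ring
    · intro s; exact mul_nonneg (hf0 s) (hgIcc s).1
    · intro s
      apply mul_nonneg (hf0 s)
      simp only [ContinuousMap.sub_apply, ContinuousMap.one_apply]
      linarith [(hgIcc s).2]
  linarith

end Stmt2Aux

end RMK

namespace Stmt2Aux

open MeasureTheory TopologicalSpace Set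

variable {S : Type*} [TopologicalSpace S]
variable (Λ : C(S, ℝ) → ℝ)
variable (h_nonneg : ∀ f : C(S, ℝ), (∀ s, 0 ≤ f s) → 0 ≤ Λ f)
variable (h_mono : ∀ f g : C(S, ℝ), (∀ s, 0 ≤ f s) → (∀ s, f s ≤ g s) → Λ f ≤ Λ g)
variable (h_add : ∀ f g : C(S, ℝ), (∀ s, 0 ≤ f s) → (∀ s, 0 ≤ g s) → Λ (f + g) = Λ f + Λ g)
variable (h_smul : ∀ (c : ℝ) (f : C(S, ℝ)), 0 ≤ c → (∀ s, 0 ≤ f s) → Λ (c • f) = c * Λ f)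

include h_add in
lemma lam_zero : Λ 0 = 0 := by
  have h := h_add 0 0 (fun s => by simp) (fun s => by simp)
  simp only [add_zero] at h
  linarith

include h_add in
lemma lam_sum {ι : Type*} (t : Finset ι) (F : ι → C(S, ℝ)) (hF : ∀ i, ∀ s, 0 ≤ F i s) :
    Λ (∑ i ∈ t, F i) = ∑ i ∈ t, Λ (F i) := by
  classical
  induction t using Finset.cons_induction with
  | empty => simpa using lam_zero Λ h_add
  | cons a t ha ih =>
    rw [Finset.sum_cons, Finset.sum_cons, h_add _ _ (hF a), ih]
    intro s
    have : (∑ i ∈ t, F i) s = ∑ i ∈ t, F i s := by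
      simp
    rw [this]
    exact Finset.sum_nonneg fun i _ => hF i s

variable [CompactSpace S] [T2Space S]

/-- The content associated to `Λ`. -/
noncomputable def rContent : Content S where
  toFun K := Real.toNNReal (lamr Λ (K : Set S))
  mono' K₁ K₂ h := Real.toNNReal_mono (lamr_mono Λ h_nonneg h)
  sup_disjoint' K₁ K₂ hd hc₁ hc₂ := by
    have e : lamr Λ ((K₁ ⊔ K₂ : Compacts S) : Set S) = lamr Λ (K₁ : Set S) + lamr Λ (K₂ : Set S) := by
      have h1 : ((K₁ ⊔ K₂ : Compacts S) : Set S) = (K₁ : Set S) ∪ (K₂ : Set S) := rfl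
      rw [h1]
      exact le_antisymm (lamr_union_le Λ h_nonneg h_add _ _)
        (union_le_lamr Λ h_nonneg h_mono h_add hc₁ hc₂ hd)
    beta_reduce
    rw [e, Real.toNNReal_add (lamr_nonneg Λ h_nonneg _) (lamr_nonneg Λ h_nonneg _)]
  sup_le' K₁ K₂ := by
    have h1 : ((K₁ ⊔ K₂ : Compacts S) : Set S) = (K₁ : Set S) ∪ (K₂ : Set S) := rfl
    beta_reduce
    rw [h1]
    exact le_trans (Real.toNNReal_mono (lamr_union_le Λ h_nonneg h_add _ _))
      Real.toNNReal_add_le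

end Stmt2Aux

namespace Stmt2Aux

open MeasureTheory TopologicalSpace Set

variable {S : Type*} [TopologicalSpace S]
variable (Λ : C(S, ℝ) → ℝ)
variable (h_nonneg : ∀ f : C(S, ℝ), (∀ s, 0 ≤ f s) → 0 ≤ Λ f)
variable (h_mono : ∀ f g : C(S, ℝ), (∀ s, 0 ≤ f s) → (∀ s, f s ≤ g s) → Λ f ≤ Λ g)
variable (h_add : ∀ f g : C(S, ℝ), (∀ s, 0 ≤ f s) → (∀ s, 0 ≤ g s) → Λ (f + g) = Λ f + Λ g)
variable (h_smul : ∀ (c : ℝ) (f : C(S, ℝ)), 0 ≤ c → (∀ s, 0 ≤ f s) → Λ (c • f) = c * Λ f)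
variable [CompactSpace S] [T2Space S]

include h_nonneg h_mono h_add h_smul in
theorem exists_measure_forall_le_integral [MeasurableSpace S] [BorelSpace S] :
    ∃ μ : Measure S, IsFiniteMeasure μ ∧
      ∀ f : C(S, ℝ), (∀ s, 0 ≤ f s) → Λ f ≤ ∫ s, f s ∂μ := by
  classical
  set κ := rContent Λ h_nonneg h_mono h_add with hκ
  have hfin : IsFiniteMeasure κ.measure := by
    constructor
    have h1 : κ.measure univ = κ.outerMeasure univ := κ.measure_apply MeasurableSet.univ
    have h2 : κ.outerMeasure univ = κ.innerContent ⟨univ, isOpen_univ⟩ :=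
      κ.outerMeasure_opens ⟨univ, isOpen_univ⟩
    have h3 : κ.innerContent ⟨univ, isOpen_univ⟩ ≤ κ ⟨univ, isCompact_univ⟩ :=
      κ.innerContent_le _ _ subset_rfl
    calc κ.measure univ = κ.innerContent ⟨univ, isOpen_univ⟩ := by rw [h1, h2]
      _ ≤ κ ⟨univ, isCompact_univ⟩ := h3
      _ < ⊤ := ENNReal.coe_lt_top
  refine ⟨κ.measure, hfin, ?_⟩
  intro f hf0
  set μ := κ.measure with hμ
  have hint : Integrable (fun s => f s) μ := by
    refine Integrable.mono' (integrable_const ‖f‖) f.continuous.aestronglyMeasurable ?_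
    exact Eventually.of_forall fun s => f.norm_coe_le_norm s
  set R := (μ univ).toReal with hR
  have hR0 : 0 ≤ R := ENNReal.toReal_nonneg
  have main : ∀ ε : ℝ, 0 < ε → Λ f ≤ (∫ s, f s ∂μ) + ε * (R + 1) := by
    intro ε hε
    set n : ℕ := ⌊‖f‖ / ε⌋₊ + 1 with hn
    have hfn : ∀ s, f s < n * ε := by
      intro s
      have h1 : f s ≤ ‖f‖ := (Real.le_norm_self _).trans (f.norm_coe_le_norm s)
      have h2 : ‖f‖ / ε < n := by
        exact_mod_cast Nat.lt_floor_add_one (‖f‖ / ε)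
      calc f s ≤ ‖f‖ := h1
        _ < n * ε := by rwa [div_lt_iff₀ hε] at h2
    set E : Fin n → Set S := fun i => f ⁻¹' (Ico ((i : ℕ) * ε) (((i : ℕ) + 1) * ε)) with hE
    have hEmeas : ∀ i, MeasurableSet (E i) :=
      fun i => (measurableSet_Ico).preimage f.continuous.measurable
    have hEdisj : Pairwise (Function.onFun Disjoint E) := by
      intro i j hij
      apply Set.disjoint_left.mpr
      intro x hxi hxj
      rcases lt_or_gt_of_ne (fun h : (i : ℕ) = (j : ℕ) => hij (Fin.ext h)) with h | h
      · have : ((i : ℕ) + 1 : ℝ) * ε ≤ (j : ℕ) * ε := by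
          have : ((i : ℕ) + 1 : ℝ) ≤ (j : ℕ) := by exact_mod_cast h
          exact mul_le_mul_of_nonneg_right this hε.le
        exact absurd (hxi.2.trans_le (this.trans hxj.1)) (lt_irrefl _)
      · have : ((j : ℕ) + 1 : ℝ) * ε ≤ (i : ℕ) * ε := by
          have : ((j : ℕ) + 1 : ℝ) ≤ (i : ℕ) := by exact_mod_cast h
          exact mul_le_mul_of_nonneg_right this hε.le
        exact absurd (hxj.2.trans_le (this.trans hxi.1)) (lt_irrefl _)
    have hEcover : (⋃ i, E i) = univ := by
      apply eq_univ_of_forall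
      intro x
      have hx0 : 0 ≤ f x / ε := div_nonneg (hf0 x) hε.le
      set m : ℕ := ⌊f x / ε⌋₊ with hm
      have hmn : m < n := by
        have : m ≤ ⌊‖f‖ / ε⌋₊ :=
          Nat.floor_le_floor (div_le_div_of_nonneg_right
            ((Real.le_norm_self _).trans (f.norm_coe_le_norm x)) hε.le) 
        omega
      refine mem_iUnion.mpr ⟨⟨m, hmn⟩, ?_, ?_⟩
      · simpa using (le_div_iff₀ hε).mp (Nat.floor_le hx0)
      · have : f x / ε < m + 1 := Nat.lt_floor_add_one _
        simpa using (div_lt_iff₀ hε).mp this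
    refine le_of_forall_pos_le_add ?_
    intro δ' hδ'
    have hnn : (0:ℝ) < n * n * ε + 1 := by positivity
    set δ : ℝ := δ' / (n * n * ε + 1) with hδdef
    have hδ : 0 < δ := div_pos hδ' hnn
    have hδ0 : ENNReal.ofReal δ ≠ 0 := by
      simpa using (ENNReal.ofReal_pos.mpr hδ).ne'
    have hUex : ∀ i : Fin n, ∃ Uu, E i ⊆ Uu ∧ IsOpen Uu ∧ μ Uu < μ (E i) + ENNReal.ofReal δ :=
      fun i => (E i).exists_isOpen_lt_add (measure_ne_top μ _) hδ0
    choose U hEU hUopen hUμ using hUex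
    set V : Fin n → Set S := fun i => U i ∩ f ⁻¹' (Iio (((i:ℕ)+1) * ε)) with hV
    have hVopen : ∀ i, IsOpen (V i) := fun i => (hUopen i).inter (isOpen_Iio.preimage f.continuous)
    have hEV : ∀ i, E i ⊆ V i := fun i => subset_inter (hEU i) (fun x hx => hx.2)
    have hVμ : ∀ i, μ (V i) ≤ μ (E i) + ENNReal.ofReal δ :=
      fun i => (measure_mono inter_subset_left).trans (hUμ i).le
    have hcover : (univ : Set S) ⊆ ⋃ i, V i := by
      rw [← hEcover]; exact iUnion_mono hEV
    obtain ⟨H, hH⟩ := PartitionOfUnity.exists_isSubordinate isClosed_univ V hVopen hcover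
    set c : Fin n → ℝ := fun i => ((i:ℕ) + 1) * ε with hc
    have hcpos : ∀ i, 0 ≤ c i := fun i => by positivity
    set F : Fin n → C(S, ℝ) := fun i => (H i : C(S,ℝ)) * f with hF
    have hFnn : ∀ i, ∀ s, 0 ≤ F i s := fun i s => mul_nonneg (H.nonneg i s) (hf0 s)
    have hsumF : (∑ i, F i) = f := by
      ext s
      have h1 : (∑ i, F i) s = ∑ i, (H i s * f s) := by simp [hF]
      have h2 : ∑ i : Fin n, H i s = 1 := by
        have := H.sum_eq_one (mem_univ s)
        rwa [finsum_eq_sum_of_fintype] at this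
      rw [h1, ← Finset.sum_mul, h2, one_mul]
    have hΛsum : Λ f = ∑ i, Λ (F i) := by
      conv_lhs => rw [← hsumF]
      exact lam_sum Λ h_add Finset.univ F hFnn
    have hA2 : ∀ i, Λ (F i) ≤ c i * Λ ((H i : C(S,ℝ))) := by
      intro i
      have hle : ∀ s, F i s ≤ (c i • (H i : C(S,ℝ))) s := by
        intro s
        simp only [ContinuousMap.smul_apply, smul_eq_mul, hF, ContinuousMap.mul_apply]
        by_cases hs : H i s = 0
        · rw [hs]; simp [H.nonneg i s, hcpos i]
        · have hsV : s ∈ V i := hH i (subset_tsupport _ (Function.mem_support.mpr hs))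
          have hfs : f s < c i := hsV.2
          calc H i s * f s ≤ H i s * c i :=
                mul_le_mul_of_nonneg_left hfs.le (H.nonneg i s)
            _ = c i * H i s := mul_comm _ _
      calc Λ (F i) ≤ Λ (c i • (H i : C(S,ℝ))) := h_mono _ _ (hFnn i) hle
        _ = c i * Λ ((H i : C(S,ℝ))) := h_smul _ _ (hcpos i) (H.nonneg i)
    have hA3 : ∀ i, Λ ((H i : C(S,ℝ))) ≤ (μ (V i)).toReal := by
      intro i
      have k1 : Λ ((H i : C(S,ℝ))) ≤ lamr Λ (tsupport (H i)) :=
        le_lamr Λ h_mono (H.nonneg i) (H.le_one i)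
          (fun s hs => image_eq_zero_of_notMem_tsupport hs)
      have hKc : IsCompact (tsupport (H i)) := (isClosed_tsupport _).isCompact
      have k2 : κ ⟨tsupport (H i), hKc⟩ ≤ μ (V i) := by
        calc κ (⟨tsupport (H i), hKc⟩ : Compacts S)
            ≤ κ.innerContent ⟨V i, hVopen i⟩ := κ.le_innerContent _ _ (hH i)
          _ = κ.outerMeasure (V i) := (κ.outerMeasure_opens ⟨V i, hVopen i⟩).symm
          _ = μ (V i) := (κ.measure_apply (hVopen i).measurableSet).symm
      have k4 : (κ (⟨tsupport (H i), hKc⟩ : Compacts S)).toReal = lamr Λ (tsupport (H i)) := by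
        rw [hκ]
        simp only [Content.mk_apply, rContent, ENNReal.coe_toReal]
        exact Real.coe_toNNReal _ (lamr_nonneg Λ h_nonneg _)
      have k3 := ENNReal.toReal_mono (measure_ne_top μ _) k2
      rw [k4] at k3
      exact k1.trans k3
    have hA4 : ∀ i, (μ (V i)).toReal ≤ (μ (E i)).toReal + δ := by
      intro i
      have hne : μ (E i) + ENNReal.ofReal δ ≠ ⊤ :=
        ENNReal.add_ne_top.mpr ⟨measure_ne_top μ _, ENNReal.ofReal_ne_top⟩
      have := ENNReal.toReal_mono hne (hVμ i)
      rwa [ENNReal.toReal_add (measure_ne_top μ _) ENNReal.ofReal_ne_top,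
        ENNReal.toReal_ofReal hδ.le] at this
    have hEuniv : (⋃ i ∈ (Finset.univ : Finset (Fin n)), E i) = univ := by
      simpa using hEcover
    have hsplit : ∫ s, f s ∂μ = ∑ i, ∫ s in E i, f s ∂μ := by
      rw [← setIntegral_univ, ← hEuniv]
      exact integral_biUnion_finset Finset.univ (fun i _ => hEmeas i)
        (fun i _ j _ hij => hEdisj hij) (fun i _ => hint.integrableOn)
    have hA7 : ∑ i : Fin n, ((i:ℕ) * ε) * (μ (E i)).toReal ≤ ∫ s, f s ∂μ := by
      rw [hsplit]
      apply Finset.sum_le_sum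
      intro i _
      exact setIntegral_ge_of_const_le_real (hEmeas i) (measure_ne_top μ _)
        (fun x hx => hx.1) hint.integrableOn
    have hA8 : ∑ i, (μ (E i)).toReal ≤ R := by
      have h1 : ∑ i : Fin n, (μ (E i)).toReal = (∑ i : Fin n, μ (E i)).toReal :=
        (ENNReal.toReal_sum (fun i _ => measure_ne_top μ _)).symm
      rw [h1]
      apply ENNReal.toReal_mono (measure_ne_top μ _)
      rw [← measure_biUnion_finset (fun i _ j _ hij => hEdisj hij) (fun i _ => hEmeas i)]
      exact measure_mono (subset_univ _)
    have hA9 : ∑ i, c i ≤ n * n * ε := by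
      have h1 : ∀ i : Fin n, c i ≤ (n:ℝ) * ε := by
        intro i
        apply mul_le_mul_of_nonneg_right _ hε.le
        exact_mod_cast Nat.succ_le_of_lt i.isLt
      calc ∑ i : Fin n, c i ≤ ∑ j : Fin n, (n:ℝ) * ε := Finset.sum_le_sum fun i _ => h1 i
        _ = n * (n * ε) := by simp [Finset.sum_const, Finset.card_univ, nsmul_eq_mul]
        _ = n * n * ε := by ring
    have hfinal : δ * (n * n * ε) ≤ δ' := by
      rw [hδdef, div_mul_eq_mul_div, div_le_iff₀ hnn]
      nlinarith [hδ'.le]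
    calc Λ f = ∑ i, Λ (F i) := hΛsum
      _ ≤ ∑ i, c i * (μ (V i)).toReal :=
          Finset.sum_le_sum fun i _ =>
            (hA2 i).trans (mul_le_mul_of_nonneg_left (hA3 i) (hcpos i))
      _ ≤ ∑ i, c i * ((μ (E i)).toReal + δ) :=
          Finset.sum_le_sum fun i _ => mul_le_mul_of_nonneg_left (hA4 i) (hcpos i)
      _ = ∑ i : Fin n, ((((i:ℕ) * ε) * (μ (E i)).toReal) + (ε * (μ (E i)).toReal + δ * c i)) := by
          apply Finset.sum_congr rfl
          intro i _
          simp only [hc]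
          ring
      _ = (∑ i : Fin n, ((i:ℕ) * ε) * (μ (E i)).toReal)
            + (ε * ∑ i, (μ (E i)).toReal + δ * ∑ i, c i) := by
          rw [Finset.sum_add_distrib, Finset.sum_add_distrib, Finset.mul_sum, Finset.mul_sum]
      _ ≤ (∫ s, f s ∂μ) + (ε * R + δ * (n * n * ε)) :=
          add_le_add hA7 (add_le_add (mul_le_mul_of_nonneg_left hA8 hε.le)
            (mul_le_mul_of_nonneg_left hA9 hδ.le))
      _ ≤ ((∫ s, f s ∂μ) + ε * (R + 1)) + δ' := by nlinarith [hε.le, hδ'.le]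

  refine le_of_forall_pos_le_add ?_
  intro ε' hε'
  have h1 : 0 < ε' / (R + 1) := div_pos hε' (by linarith)
  have := main _ h1
  rwa [div_mul_cancel₀ _ (by linarith : R + 1 ≠ 0)] at this

end Stmt2Aux

namespace Stmt2Aux

open MeasureTheory Set

lemma split_aux {a b c : ℝ} (hb : 0 ≤ b) (hc : 0 ≤ c) (hab : |a| ≤ b + c) :
    |a - max (min a b) (-b)| ≤ c := by
  rw [abs_le] at hab ⊢
  simp only [min_def, max_def]
  split_ifs <;> constructor <;> linarith

variable {S : Type*} [TopologicalSpace S] [CompactSpace S]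

/-- The "absolute value" functional associated to `ψ`, defined on nonnegative functions. -/
noncomputable def lamAbs (ψ : StrongDual ℝ C(S, ℝ)) (f : C(S, ℝ)) : ℝ :=
  sSup ((fun g : C(S, ℝ) => ψ g) '' {g | ∀ s, |g s| ≤ f s})

lemma lamAbs_bddAbove (ψ : StrongDual ℝ C(S, ℝ)) (f : C(S, ℝ)) :
    BddAbove ((fun g : C(S, ℝ) => ψ g) '' {g | ∀ s, |g s| ≤ f s}) := by
  refine ⟨‖ψ‖ * ‖f‖, ?_⟩
  rintro a ⟨g, hg, rfl⟩
  have h1 : ‖g‖ ≤ ‖f‖ := by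
    refine (ContinuousMap.norm_le g (norm_nonneg f)).mpr fun s => ?_
    calc ‖g s‖ = |g s| := Real.norm_eq_abs _
      _ ≤ f s := hg s
      _ ≤ ‖f s‖ := Real.le_norm_self _
      _ ≤ ‖f‖ := f.norm_coe_le_norm s
  calc ψ g ≤ ‖ψ g‖ := Real.le_norm_self _
    _ ≤ ‖ψ‖ * ‖g‖ := ψ.le_opNorm g
    _ ≤ ‖ψ‖ * ‖f‖ := mul_le_mul_of_nonneg_left h1 (norm_nonneg ψ)

lemma lamAbs_mem_le (ψ : StrongDual ℝ C(S, ℝ)) {f g : C(S, ℝ)}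
    (hg : ∀ s, |g s| ≤ f s) : ψ g ≤ lamAbs ψ f :=
  le_csSup (lamAbs_bddAbove ψ f) ⟨g, hg, rfl⟩

lemma lamAbs_nonempty (ψ : StrongDual ℝ C(S, ℝ)) {f : C(S, ℝ)} (hf : ∀ s, 0 ≤ f s) :
    ((fun g : C(S, ℝ) => ψ g) '' {g | ∀ s, |g s| ≤ f s}).Nonempty :=
  ⟨ψ 0, ⟨0, fun s => by simpa using hf s, rfl⟩⟩

lemma lamAbs_nonneg (ψ : StrongDual ℝ C(S, ℝ)) {f : C(S, ℝ)} (hf : ∀ s, 0 ≤ f s) :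
    0 ≤ lamAbs ψ f := by
  have := lamAbs_mem_le ψ (g := 0) (f := f) (fun s => by simpa using hf s)
  simpa using this

lemma lamAbs_mono (ψ : StrongDual ℝ C(S, ℝ)) (f g : C(S, ℝ))
    (hf : ∀ s, 0 ≤ f s) (hfg : ∀ s, f s ≤ g s) : lamAbs ψ f ≤ lamAbs ψ g := by
  apply csSup_le_csSup (lamAbs_bddAbove ψ g) (lamAbs_nonempty ψ hf)
  rintro a ⟨h, hh, rfl⟩
  exact ⟨h, fun s => (hh s).trans (hfg s), rfl⟩

lemma lamAbs_smul (ψ : StrongDual ℝ C(S, ℝ)) (c : ℝ) (f : C(S, ℝ))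
    (hc : 0 ≤ c) (hf : ∀ s, 0 ≤ f s) : lamAbs ψ (c • f) = c * lamAbs ψ f := by
  rcases eq_or_lt_of_le hc with rfl | hc
  · simp only [zero_smul, zero_mul]
    have hset : {g : C(S, ℝ) | ∀ s, |g s| ≤ (0 : C(S, ℝ)) s} = {0} := by
      ext g
      simp only [mem_setOf_eq, ContinuousMap.zero_apply, mem_singleton_iff]
      constructor
      · intro h
        ext s
        simpa using abs_nonpos_iff.mp (h s)
      · rintro rfl s
        simp
    rw [lamAbs, hset]
    simp
  · have hcf : ∀ s, 0 ≤ (c • f) s := fun s => by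
      simpa using mul_nonneg hc.le (hf s)
    apply le_antisymm
    · apply csSup_le (lamAbs_nonempty ψ hcf)
      rintro a ⟨g, hg, rfl⟩
      have hmem : ∀ s, |(c⁻¹ • g) s| ≤ f s := by
        intro s
        have := hg s
        simp only [ContinuousMap.smul_apply, smul_eq_mul] at this ⊢
        rw [abs_mul, abs_of_nonneg (inv_nonneg.mpr hc.le)]
        rw [inv_mul_le_iff₀ hc]
        exact this
      have h1 : ψ g = c * ψ (c⁻¹ • g) := by
        rw [_root_.map_smul]
        simp [smul_eq_mul, ← mul_assoc, mul_inv_cancel₀ hc.ne']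
      show ψ g ≤ c * lamAbs ψ f
      rw [h1]
      exact mul_le_mul_of_nonneg_left (lamAbs_mem_le ψ hmem) hc.le
    · rw [← le_div_iff₀' hc]
      apply csSup_le (lamAbs_nonempty ψ hf)
      rintro a ⟨g, hg, rfl⟩
      rw [le_div_iff₀' hc]
      have hmem : ∀ s, |(c • g) s| ≤ (c • f) s := by
        intro s
        simp only [ContinuousMap.smul_apply, smul_eq_mul]
        rw [abs_mul, abs_of_nonneg hc.le]
        exact mul_le_mul_of_nonneg_left (hg s) hc.le
      have h1 : c * ψ g = ψ (c • g) := by rw [_root_.map_smul]; simp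
      show c * ψ g ≤ lamAbs ψ (c • f)
      rw [h1]
      exact lamAbs_mem_le ψ hmem

lemma lamAbs_add (ψ : StrongDual ℝ C(S, ℝ)) (f₁ f₂ : C(S, ℝ))
    (hf₁ : ∀ s, 0 ≤ f₁ s) (hf₂ : ∀ s, 0 ≤ f₂ s) :
    lamAbs ψ (f₁ + f₂) = lamAbs ψ f₁ + lamAbs ψ f₂ := by
  have hsum : ∀ s, 0 ≤ (f₁ + f₂) s := fun s => by
    simpa using add_nonneg (hf₁ s) (hf₂ s)
  apply le_antisymm
  · apply csSup_le (lamAbs_nonempty ψ hsum)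
    rintro a ⟨g, hg, rfl⟩
    set g₁ : C(S, ℝ) := ⟨fun s => max (min (g s) (f₁ s)) (-(f₁ s)),
      ((g.continuous.min f₁.continuous).max f₁.continuous.neg)⟩ with hg₁
    have hg₁mem : ∀ s, |g₁ s| ≤ f₁ s := by
      intro s
      rw [abs_le]
      constructor
      · exact le_max_right _ _
      · exact max_le (min_le_right _ _) ((neg_nonpos.mpr (hf₁ s)).trans (hf₁ s))
    have hg₂mem : ∀ s, |(g - g₁) s| ≤ f₂ s := by
      intro s
      simp only [ContinuousMap.sub_apply, hg₁, ContinuousMap.coe_mk]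
      exact split_aux (hf₁ s) (hf₂ s) (by simpa using hg s)
    have : ψ g = ψ g₁ + ψ (g - g₁) := by
      rw [map_sub]; ring
    show ψ g ≤ lamAbs ψ f₁ + lamAbs ψ f₂
    rw [this]
    exact add_le_add (lamAbs_mem_le ψ hg₁mem) (lamAbs_mem_le ψ hg₂mem)
  · have h1 : lamAbs ψ f₁ ≤ lamAbs ψ (f₁ + f₂) - lamAbs ψ f₂ := by
      apply csSup_le (lamAbs_nonempty ψ hf₁)
      rintro a ⟨g₁, hg₁, rfl⟩
      show ψ g₁ ≤ lamAbs ψ (f₁ + f₂) - lamAbs ψ f₂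
      have h2 : lamAbs ψ f₂ ≤ lamAbs ψ (f₁ + f₂) - ψ g₁ := by
        apply csSup_le (lamAbs_nonempty ψ hf₂)
        rintro a ⟨g₂, hg₂, rfl⟩
        show ψ g₂ ≤ lamAbs ψ (f₁ + f₂) - ψ g₁
        have hmem : ∀ s, |(g₁ + g₂) s| ≤ (f₁ + f₂) s := by
          intro s
          simp only [ContinuousMap.add_apply]
          exact (abs_add_le _ _).trans (add_le_add (hg₁ s) (hg₂ s))
        have := lamAbs_mem_le ψ hmem
        rw [map_add] at this
        linarith
      linarith
    linarith

end Stmt2Aux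

namespace Stmt2Aux

open MeasureTheory Set

variable {S : Type*} [TopologicalSpace S] [CompactSpace S] [T2Space S]

theorem tendsto_zero_of_bounded_of_ptwise (ψ : StrongDual ℝ C(S, ℝ))
    (g : ℕ → C(S, ℝ)) (M : ℝ) (hM : ∀ n, ‖g n‖ ≤ M)
    (hpt : ∀ s, Tendsto (fun n => g n s) atTop (nhds 0)) :
    Tendsto (fun n => ψ (g n)) atTop (nhds 0) := by
  letI : MeasurableSpace S := borel S
  haveI : BorelSpace S := ⟨rfl⟩
  obtain ⟨μ, hfin, hle⟩ := exists_measure_forall_le_integral (lamAbs ψ)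
    (fun f hf => lamAbs_nonneg ψ hf) (lamAbs_mono ψ) (lamAbs_add ψ)
    (fun c f hc hf => lamAbs_smul ψ c f hc hf)
  set G : ℕ → C(S, ℝ) := fun n => ⟨fun s => |g n s|, (g n).continuous.abs⟩ with hG
  have key : ∀ n, ‖ψ (g n)‖ ≤ ∫ s, |g n s| ∂μ := by
    intro n
    have h1 : ψ (g n) ≤ lamAbs ψ (G n) :=
      lamAbs_mem_le ψ (fun s => le_refl _)
    have h2 : -ψ (g n) ≤ lamAbs ψ (G n) := by
      have : ∀ s, |(-(g n)) s| ≤ (G n) s := fun s => by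
        simp [hG]
      have h3 := lamAbs_mem_le ψ this
      rwa [map_neg] at h3
    have h4 : lamAbs ψ (G n) ≤ ∫ s, (G n) s ∂μ :=
      hle (G n) (fun s => abs_nonneg _)
    rw [Real.norm_eq_abs, abs_le]
    constructor
    · have : ∫ s, (G n) s ∂μ = ∫ s, |g n s| ∂μ := rfl
      rw [← this]; linarith
    · have : ∫ s, (G n) s ∂μ = ∫ s, |g n s| ∂μ := rfl
      rw [← this]; linarith
  have hlim : Tendsto (fun n => ∫ s, |g n s| ∂μ) atTop (nhds 0) := by
    have h0 : (0 : ℝ) = ∫ _s, (0:ℝ) ∂μ := by simp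
    rw [h0]
    apply tendsto_integral_of_dominated_convergence (fun _ => M)
    · exact fun n => ((g n).continuous.abs).aestronglyMeasurable
    · exact integrable_const M
    · intro n
      apply Eventually.of_forall
      intro s
      have : |g n s| ≤ ‖g n‖ := by
        rw [← Real.norm_eq_abs]
        exact (g n).norm_coe_le_norm s
      calc ‖|g n s|‖ = |g n s| := by rw [Real.norm_eq_abs, abs_abs]
        _ ≤ M := this.trans (hM n)
    · apply Eventually.of_forall
      intro s
      have := (hpt s).abs
      simpa using this
  exact squeeze_zero_norm key hlim

end Stmt2Aux

namespace Stmt2Aux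

open NormedSpace Set

variable (X : Type*) [NormedAddCommGroup X] [NormedSpace ℝ X]

/-- The closed unit ball of the dual with the weak-star topology. -/
def dBall : Set (WeakDual ℝ X) :=
  WeakDual.toStrongDual ⁻¹' Metric.closedBall 0 1

instance : CompactSpace ↥(dBall X) :=
  isCompact_iff_compactSpace.mp (WeakDual.isCompact_closedBall (0 : StrongDual ℝ X) 1)

lemma dBall_norm_le {X : Type*} [NormedAddCommGroup X] [NormedSpace ℝ X]
    (f : ↥(dBall X)) : ‖WeakDual.toStrongDual (f : WeakDual ℝ X)‖ ≤ 1 := by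
  have h : (f : WeakDual ℝ X) ∈ WeakDual.toStrongDual ⁻¹' Metric.closedBall 0 1 := f.2
  rw [mem_preimage, Metric.mem_closedBall, dist_zero_right] at h
  exact h

variable {X}
variable {K : Type*} [TopologicalSpace K] [CompactSpace K]

lemma continuous_evalJ (u : C(K, X)) :
    Continuous fun p : K × ↥(dBall X) => (p.2 : WeakDual ℝ X) (u p.1) := by
  rw [continuous_iff_continuousAt]
  rintro ⟨t₀, f₀⟩
  have h1 : Tendsto (fun p : K × ↥(dBall X) =>
      (p.2 : WeakDual ℝ X) (u p.1) - (p.2 : WeakDual ℝ X) (u t₀))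
      (nhds (t₀, f₀)) (nhds 0) := by
    apply squeeze_zero_norm (a := fun p : K × ↥(dBall X) => ‖u p.1 - u t₀‖)
    · rintro ⟨t, f⟩
      have h2 : (f : WeakDual ℝ X) (u t) - (f : WeakDual ℝ X) (u t₀)
          = (WeakDual.toStrongDual (f : WeakDual ℝ X)) (u t - u t₀) := by
        simp [map_sub]
      rw [h2]
      calc ‖(WeakDual.toStrongDual (f : WeakDual ℝ X)) (u t - u t₀)‖
          ≤ ‖WeakDual.toStrongDual (f : WeakDual ℝ X)‖ * ‖u t - u t₀‖ :=
            ContinuousLinearMap.le_opNorm _ _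
        _ ≤ 1 * ‖u t - u t₀‖ :=
            mul_le_mul_of_nonneg_right (dBall_norm_le f) (norm_nonneg _)
        _ = ‖u t - u t₀‖ := one_mul _
    · have hc : Continuous fun p : K × ↥(dBall X) => ‖u p.1 - u t₀‖ :=
        (((map_continuous u).comp continuous_fst).sub continuous_const).norm
      have h := hc.continuousAt (x := (t₀, f₀))
      simpa [ContinuousAt] using h
  have h2 : Tendsto (fun p : K × ↥(dBall X) => (p.2 : WeakDual ℝ X) (u t₀))
      (nhds (t₀, f₀)) (nhds ((f₀ : WeakDual ℝ X) (u t₀))) := by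
    have hc : Continuous fun p : K × ↥(dBall X) => (p.2 : WeakDual ℝ X) (u t₀) :=
      (WeakDual.eval_continuous (u t₀)).comp (continuous_subtype_val.comp continuous_snd)
    exact hc.continuousAt
  have h3 := h1.add h2
  rw [zero_add] at h3
  have h4 : (fun p : K × ↥(dBall X) => (p.2 : WeakDual ℝ X) (u p.1))
      = fun p : K × ↥(dBall X) =>
        ((p.2 : WeakDual ℝ X) (u p.1) - (p.2 : WeakDual ℝ X) (u t₀))
          + (p.2 : WeakDual ℝ X) (u t₀) := by
    funext p
    ring
  rw [ContinuousAt, h4]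
  exact h3

variable (X K) in
/-- The canonical embedding of `C(K, X)` into `C(K × B, ℝ)`. -/
noncomputable def Jmap : C(K, X) →ₗᵢ[ℝ] C(K × ↥(dBall X), ℝ) where
  toFun u := ⟨fun p => (p.2 : WeakDual ℝ X) (u p.1), continuous_evalJ u⟩
  map_add' u v := by
    ext p
    simp
  map_smul' c u := by
    ext p
    simp
  norm_map' u := by
    apply le_antisymm
    · apply (ContinuousMap.norm_le _ (norm_nonneg u)).mpr
      rintro ⟨t, f⟩
      calc ‖(f : WeakDual ℝ X) (u t)‖
          = ‖(WeakDual.toStrongDual (f : WeakDual ℝ X)) (u t)‖ := rfl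
        _ ≤ ‖WeakDual.toStrongDual (f : WeakDual ℝ X)‖ * ‖u t‖ :=
            ContinuousLinearMap.le_opNorm _ _
        _ ≤ 1 * ‖u‖ := by
            apply mul_le_mul (dBall_norm_le f) (u.norm_coe_le_norm t) (norm_nonneg _)
            exact zero_le_one
        _ = ‖u‖ := one_mul _
    · apply (ContinuousMap.norm_le _ (norm_nonneg _)).mpr
      intro t
      obtain ⟨φ, hφ1, hφeq⟩ := exists_dual_vector'' ℝ (u t)
      have hmem : WeakDual.toStrongDual.symm φ ∈ dBall X := by
        simp only [dBall, mem_preimage, Metric.mem_closedBall, dist_zero_right]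
        simpa using hφ1
      set b : ↥(dBall X) := ⟨WeakDual.toStrongDual.symm φ, hmem⟩ with hb
      have h5 : (b : WeakDual ℝ X) (u t) = φ (u t) := rfl
      calc ‖u t‖ = φ (u t) := by rw [hφeq]; rfl
        _ ≤ ‖φ (u t)‖ := Real.le_norm_self _
        _ = ‖(⟨fun p => (p.2 : WeakDual ℝ X) (u p.1), continuous_evalJ u⟩
              : C(K × ↥(dBall X), ℝ)) (t, b)‖ := by rw [← h5]; rfl
        _ ≤ _ := ContinuousMap.norm_coe_le_norm _ _

end Stmt2Aux

namespace Stmt2Aux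

open NormedSpace Set

variable {X : Type*} [NormedAddCommGroup X] [NormedSpace ℝ X]
variable {K : Type*} [TopologicalSpace K] [CompactSpace K]

lemma exists_extension (φ : StrongDual ℝ C(K, X)) :
    ∃ ψ : StrongDual ℝ C(K × ↥(dBall X), ℝ), ∀ u : C(K, X), ψ (Jmap X K u) = φ u := by
  set J := Jmap X K with hJ
  set p : Subspace ℝ C(K × ↥(dBall X), ℝ) := LinearMap.range J.toLinearMap with hp
  set e : C(K, X) ≃ₗᵢ[ℝ] p := J.equivRange with he
  set f₀ : p →L[ℝ] ℝ :=
    φ.comp (e.symm.toContinuousLinearEquiv : p ≃L[ℝ] C(K, X)).toContinuousLinearMap with hf₀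
  obtain ⟨ψ, hψ, -⟩ := exists_extension_norm_eq p f₀
  refine ⟨ψ, fun u => ?_⟩
  have hmem : J u ∈ p := ⟨u, rfl⟩
  have h1 := hψ ⟨J u, hmem⟩
  have h2 : e.symm ⟨J u, hmem⟩ = u := by
    apply e.injective
    simp only [LinearIsometryEquiv.apply_symm_apply]
    ext1
    rfl
  have h3 : f₀ ⟨J u, hmem⟩ = φ u := by
    simp only [hf₀, ContinuousLinearMap.comp_apply,
      ContinuousLinearEquiv.coe_coe, LinearIsometryEquiv.coe_toContinuousLinearEquiv]
    rw [h2]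
  rw [← h3]
  exact h1

/-- Evaluation at a point, as a continuous linear map. -/
noncomputable def evalCLM (t : K) : C(K, X) →L[ℝ] X :=
  LinearMap.mkContinuous
    { toFun := fun u => u t
      map_add' := fun u v => rfl
      map_smul' := fun c u => rfl } 1
    (fun u => by simpa using u.norm_coe_le_norm t)

end Stmt2Aux

/-- Weak convergence of a sequence in a normed space, in terms of the continuous dual. -/
def WeakConv {E : Type*} [NormedAddCommGroup E] [NormedSpace ℝ E]
    (u : ℕ → E) (x : E) : Prop :=
  ∀ f : StrongDual ℝ E, Tendsto (fun n => f (u n)) atTop (nhds (f x))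

/-- weak convergence in `C⁰([0,T],X)` is equivalent to boundedness plus
pointwise weak convergence in `X`. -/
theorem stmt_2 {X : Type*} [NormedAddCommGroup X] [NormedSpace ℝ X] [CompleteSpace X]
    (T : ℝ) (hT : 0 < T)
    (u : ℕ → C(Set.Icc (0:ℝ) T, X)) (x : C(Set.Icc (0:ℝ) T, X)) :
    WeakConv u x ↔
      ((∃ M : ℝ, ∀ n, ‖u n‖ ≤ M) ∧ ∀ t : Set.Icc (0:ℝ) T, WeakConv (fun n => u n t) (x t)) := by
  constructor
  · intro h
    constructor
    · have hb : ∀ φ : StrongDual ℝ C(Set.Icc (0:ℝ) T, X), ∃ C : ℝ,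
          ∀ n : ℕ, ‖(NormedSpace.inclusionInDoubleDual ℝ C(Set.Icc (0:ℝ) T, X) (u n)) φ‖ ≤ C := by
        intro φ
        obtain ⟨C, hC⟩ := (h φ).norm.bddAbove_range
        exact ⟨C, fun n => hC (Set.mem_range_self n)⟩
      obtain ⟨C', hC'⟩ := banach_steinhaus hb
      refine ⟨C', fun n => ?_⟩
      have h2 : ‖(NormedSpace.inclusionInDoubleDualLi ℝ
          (E := C(Set.Icc (0:ℝ) T, X))) (u n)‖ = ‖u n‖ :=
        (NormedSpace.inclusionInDoubleDualLi ℝ).norm_map (u n)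
      rw [← h2]
      exact hC' n
    · intro t f
      exact h (f.comp (Stmt2Aux.evalCLM t))
  · rintro ⟨⟨M, hM⟩, hpt⟩
    intro φ
    obtain ⟨ψ, hψ⟩ := Stmt2Aux.exists_extension φ
    set J := Stmt2Aux.Jmap X (Set.Icc (0:ℝ) T) with hJ
    have hg : Tendsto (fun n => ψ (J (u n - x))) atTop (nhds 0) := by
      apply Stmt2Aux.tendsto_zero_of_bounded_of_ptwise ψ _ (M + ‖x‖)
      · intro n
        rw [J.norm_map]
        exact (norm_sub_le _ _).trans (add_le_add_left (hM n) _)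
      · rintro ⟨t, f⟩
        have h1 := hpt t (WeakDual.toStrongDual (f : WeakDual ℝ X))
        have h2 := h1.sub_const ((WeakDual.toStrongDual (f : WeakDual ℝ X)) (x t))
        rw [sub_self] at h2
        apply h2.congr
        intro n
        show (WeakDual.toStrongDual (f : WeakDual ℝ X)) (u n t)
            - (WeakDual.toStrongDual (f : WeakDual ℝ X)) (x t)
          = (J (u n - x)) (t, f)
        rw [← map_sub]
        rfl
    have hfin : ∀ n, φ (u n) = ψ (J (u n - x)) + φ x := fun n => by
      rw [hψ (u n - x), map_sub]; ring
    have h3 := hg.add_const (φ x)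
    rw [zero_add] at h3
    exact h3.congr (fun n => (hfin n).symm)
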